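/- Let F and θ be integers with θ ≥ 1, F odd and F ≥ 2θ + 1. Then W(F,θ) ≥ ∑_{j=0}^{θ} (F − 2(θ + j))·p_j + (F − 4θ + 2)·∑_{j=θ+1}^{(F−1)/2} p_j, where the second sum is empty (equal to zero) when θ + 1 > (F−1)/2. (This is the folding inequality obtained from the symmetry p_j = p_{F−j} of the Binomial(F,1/2) mass function.) -/

import Mathlib

/-- `p F j` is the probability mass function of the Binomial(F,1/2) distribution. -/
def binomHalf (F j : ℕ) : ℚ := (F.choose j : ℚ) * (1/2) ^ F

/-- The expected weight `W (F,θ)` of an edge under the uniform product measure. -/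
def expectedWeight (F θ : ℕ) : ℚ :=
  (∑ j ∈ Finset.range (θ + 1), (-(j : ℚ)) * binomHalf F j)
    + ∑ j ∈ Finset.Icc (θ + 1) F,
        ((j : ℚ) + 2 * (1 - (j : ℚ) / (F : ℚ) - (θ : ℚ))) * binomHalf F j

lemma binomHalf_nonneg (F j : ℕ) : 0 ≤ binomHalf F j := by
  unfold binomHalf; positivity

lemma binomHalf_symm (F j : ℕ) (h : j ≤ F) : binomHalf F (F - j) = binomHalf F j := by
  unfold binomHalf; rw [Nat.choose_symm h]

theorem expectedWeight_folding_bound (F θ : ℕ) (hθ : 1 ≤ θ) (hodd : Odd F)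
    (hF : 2 * θ + 1 ≤ F) :
    (∑ j ∈ Finset.range (θ + 1), ((F : ℚ) - 2 * ((θ : ℚ) + (j : ℚ))) * binomHalf F j)
      + ((F : ℚ) - 4 * (θ : ℚ) + 2) * ∑ j ∈ Finset.Icc (θ + 1) ((F - 1) / 2), binomHalf F j
    ≤ expectedWeight F θ := by
  obtain ⟨m, hm⟩ := hodd
  have hm2 : F = 2 * m + 1 := by omega
  have hmdiv : (F - 1) / 2 = m := by omega
  have hθm : θ ≤ m := by omega
  have hFpos : 0 < F := by omega
  have hFQ : (0 : ℚ) < F := by exact_mod_cast hFpos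
  set c : ℕ → ℚ := fun j => (j : ℚ) + 2 * (1 - (j : ℚ) / (F : ℚ) - (θ : ℚ)) with hc
  -- split the big sum
  have hIcc : Finset.Icc (θ + 1) F = Finset.Ioc θ F := Finset.Icc_add_one_left_eq_Ioc θ F
  have hsplit1 : (∑ j ∈ Finset.Ioc θ (F - θ - 1), c j * binomHalf F j)
      + ∑ j ∈ Finset.Ioc (F - θ - 1) F, c j * binomHalf F j
      = ∑ j ∈ Finset.Ioc θ F, c j * binomHalf F j :=
    Finset.sum_Ioc_consecutive _ (by omega) (by omega)
  have hsplit2 : (∑ j ∈ Finset.Ioc θ m, c j * binomHalf F j)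
      + ∑ j ∈ Finset.Ioc m (F - θ - 1), c j * binomHalf F j
      = ∑ j ∈ Finset.Ioc θ (F - θ - 1), c j * binomHalf F j :=
    Finset.sum_Ioc_consecutive _ (by omega) (by omega)
  -- reflect the tail onto range (θ+1)
  have hrefl1 : (∑ j ∈ Finset.Ioc (F - θ - 1) F, c j * binomHalf F j)
      = ∑ j ∈ Finset.range (θ + 1), c (F - j) * binomHalf F j := by
    refine Finset.sum_nbij' (fun j => F - j) (fun j => F - j) ?_ ?_ ?_ ?_ ?_
    · intro a ha; simp only [Finset.mem_Ioc] at ha; simp only [Finset.mem_range]; omega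
    · intro a ha; simp only [Finset.mem_range] at ha; simp only [Finset.mem_Ioc]; omega
    · intro a ha; simp only [Finset.mem_Ioc] at ha; omega
    · intro a ha; simp only [Finset.mem_range] at ha; omega
    · intro a ha; simp only [Finset.mem_Ioc] at ha
      rw [Nat.sub_sub_self ha.2, binomHalf_symm F a ha.2]
  -- reflect the middle part onto Ioc θ m
  have hrefl2 : (∑ j ∈ Finset.Ioc m (F - θ - 1), c j * binomHalf F j)
      = ∑ j ∈ Finset.Ioc θ m, c (F - j) * binomHalf F j := by
    refine Finset.sum_nbij' (fun j => F - j) (fun j => F - j) ?_ ?_ ?_ ?_ ?_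
    · intro a ha; simp only [Finset.mem_Ioc] at ha ⊢; omega
    · intro a ha; simp only [Finset.mem_Ioc] at ha ⊢; omega
    · intro a ha; simp only [Finset.mem_Ioc] at ha; omega
    · intro a ha; simp only [Finset.mem_Ioc] at ha; omega
    · intro a ha; simp only [Finset.mem_Ioc] at ha
      have haF : a ≤ F := by omega
      rw [Nat.sub_sub_self haF, binomHalf_symm F a haF]
  have hW : expectedWeight F θ
      = (∑ j ∈ Finset.range (θ + 1), (-(j : ℚ) + c (F - j)) * binomHalf F j)
        + ∑ j ∈ Finset.Ioc θ m, (c j + c (F - j)) * binomHalf F j := by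
    unfold expectedWeight
    rw [hIcc, ← hsplit1, ← hsplit2, hrefl1, hrefl2]
    simp only [add_mul, Finset.sum_add_distrib]
    ring
  rw [hmdiv, Finset.Icc_add_one_left_eq_Ioc]
  have hsum2 : ((F : ℚ) - 4 * θ + 2) * ∑ j ∈ Finset.Ioc θ m, binomHalf F j
      = ∑ j ∈ Finset.Ioc θ m, (c j + c (F - j)) * binomHalf F j := by
    rw [Finset.mul_sum]
    refine Finset.sum_congr rfl fun j hj => ?_
    obtain ⟨hj1, hj2⟩ := Finset.mem_Ioc.mp hj
    have hjF : j ≤ F := by omega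
    have hcast : ((F - j : ℕ) : ℚ) = (F : ℚ) - j := by rw [Nat.cast_sub hjF]
    have h1 : c j + c (F - j) = (F : ℚ) - 4 * θ + 2 := by
      rw [hc]; simp only [hcast]; field_simp; ring
    rw [h1]
  rw [hW, hsum2]
  refine add_le_add_left (Finset.sum_le_sum fun j hj => ?_) _
  have hjθ : j < θ + 1 := Finset.mem_range.mp hj
  have hjF : j ≤ F := by omega
  have hcast : ((F - j : ℕ) : ℚ) = (F : ℚ) - j := by rw [Nat.cast_sub hjF]
  have hdiv : ((F : ℚ) - j) / F = 1 - (j : ℚ) / F := by field_simp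
  have hjQ : (0 : ℚ) ≤ (j : ℚ) / F := by positivity
  have h1 : c (F - j) = (F : ℚ) - j + 2 * (1 - (1 - (j : ℚ) / F) - θ) := by
    rw [hc]; simp only [hcast, hdiv]
  refine mul_le_mul_of_nonneg_right ?_ (binomHalf_nonneg F j)
  rw [h1]; linarith
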